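/- Convergence criterion in the Yamasaki space: for u_n, u ∈ D̃, one has ‖u_n - u‖_o → 0 if and only if u_n(x) → u(x) for every x ∈ V and limsup_n Q̃(u_n) ≤ Q̃(u). -/

import Mathlib

open scoped ENNReal NNReal BigOperators
open MeasureTheory Filter

/-- A weighted graph `(b,c)` over a vertex set `V`. -/
structure WeightedGraph (V : Type*) where
  b : V → V → ℝ
  c : V → ℝ
  b_nonneg : ∀ x y, 0 ≤ b x y
  b_diag : ∀ x, b x x = 0
  b_symm : ∀ x y, b x y = b y x
  b_summable : ∀ x, Summable fun y => b x y
  c_nonneg : ∀ x, 0 ≤ c x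

/-- Membership in `ℓ²(V,m)`. -/
def MemL2 {V : Type*} (m : V → ℝ) (u : V → ℝ) : Prop :=
  Summable fun x => u x ^ 2 * m x

/-- The inner product of `ℓ²(V,m)`. -/
noncomputable def l2inner {V : Type*} (m : V → ℝ) (u v : V → ℝ) : ℝ :=
  ∑' x, u x * v x * m x

namespace WeightedGraph

variable {V : Type*} (G : WeightedGraph V)

/-- The energy functional `Q̃` with values in `[0,∞]`. -/
noncomputable def energy (u : V → ℝ) : ℝ≥0∞ :=
  (1 / 2) * ∑' p : V × V, ENNReal.ofReal (G.b p.1 p.2 * (u p.1 - u p.2) ^ 2)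
    + ∑' x, ENNReal.ofReal (G.c x * u x ^ 2)

/-- The functions of finite energy (`D̃`). -/
def FiniteEnergy (u : V → ℝ) : Prop := G.energy u < ⊤

/-- The real-valued bilinear energy form (meaningful on functions of finite energy). -/
noncomputable def energyBilin (u v : V → ℝ) : ℝ :=
  (1 / 2) * ∑' p : V × V, G.b p.1 p.2 * (u p.1 - u p.2) * (v p.1 - v p.2)
    + ∑' x, G.c x * u x * v x

/-- The generalized vertex degree. -/
noncomputable def deg (x : V) : ℝ := (∑' y, G.b x y) + G.c x

/-- The formal Laplacian `L̃` associated with `(b,c)` and the measure `m`. -/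
noncomputable def formalL (m : V → ℝ) (u : V → ℝ) (x : V) : ℝ :=
  ((∑' y, G.b x y * (u x - u y)) + G.c x * u x) / m x

/-- Connectedness of the weighted graph: any two vertices are joined by a path of edges. -/
def Connected : Prop :=
  ∀ x y : V, ∃ (n : ℕ) (p : ℕ → V), p 0 = x ∧ p n = y ∧ ∀ i < n, 0 < G.b (p i) (p (i + 1))

/-- The squared distance of the Yamasaki space with base point `o`. -/
noncomputable def ydistSq (o : V) (u v : V → ℝ) : ℝ :=
  (G.energy (fun x => u x - v x)).toReal + (u o - v o) ^ 2

/-- The domain of the regular Dirichlet form `Q^(D)`: the closure of the finitely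
supported functions in `D̃ ∩ ℓ²(V,m)` with respect to the form norm. -/
def regDom (m : V → ℝ) : Set (V → ℝ) :=
  {u | G.FiniteEnergy u ∧ MemL2 m u ∧
    ∃ f : ℕ → V → ℝ, (∀ n, (Function.support (f n)).Finite) ∧
      Filter.Tendsto
        (fun n => (G.energy (fun x => u x - f n x)).toReal + ∑' x, (u x - f n x) ^ 2 * m x)
        Filter.atTop (nhds 0)}

/-- Transience of a Dirichlet form given by its domain: existence of a strictly positive
reference function `g ∈ ℓ¹(V,m) ∩ ℓ^∞(V)` with `⟨|u|,g⟩ ≤ Q(u)^{1/2}` on the domain. -/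
def FormTransient (m : V → ℝ) (dom : Set (V → ℝ)) : Prop :=
  ∃ g : V → ℝ, (∀ x, 0 < g x) ∧ (Summable fun x => g x * m x) ∧ (∃ C, ∀ x, g x ≤ C) ∧
    ∀ u ∈ dom, ∑' x, |u x| * g x * m x ≤ Real.sqrt (G.energyBilin u u)

end WeightedGraph

/-- The data of a Dirichlet form `Q` associated with a weighted graph `(b,c)` on `ℓ²(V,m)`,
together with its semigroup `T t = e^{-tL}` and resolvent `R α = (L+α)^{-1}`, with the
standard properties: `Q` is a restriction of `Q̃` with `D(Q^(D)) ⊆ D(Q) ⊆ D(Q^(N))`,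
the semigroup is symmetric, Markovian, positivity preserving, the resolvent is characterized
by the form, and the resolvent is the Laplace transform of the semigroup. -/
structure FormSetup {V : Type*} (G : WeightedGraph V) (m : V → ℝ) where
  dom : Set (V → ℝ)
  dom_fe : ∀ u ∈ dom, G.FiniteEnergy u
  dom_l2 : ∀ u ∈ dom, MemL2 m u
  reg_sub : G.regDom m ⊆ dom
  T : ℝ → (V → ℝ) → V → ℝ
  R : ℝ → (V → ℝ) → V → ℝ
  T_linear : ∀ t, IsLinearMap ℝ (T t)
  R_linear : ∀ α, IsLinearMap ℝ (R α)
  T_semigroup : ∀ s t : ℝ, 0 < s → 0 < t → ∀ f, T (s + t) f = T s (T t f)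
  T_l2 : ∀ t : ℝ, 0 < t → ∀ f, MemL2 m f → MemL2 m (T t f)
  T_symm : ∀ t : ℝ, 0 < t → ∀ f g, MemL2 m f → MemL2 m g →
    l2inner m (T t f) g = l2inner m f (T t g)
  T_contraction : ∀ t : ℝ, 0 < t → ∀ f, MemL2 m f →
    ∑' x, T t f x ^ 2 * m x ≤ ∑' x, f x ^ 2 * m x
  T_pos : ∀ t : ℝ, 0 < t → ∀ f, (∀ x, 0 ≤ f x) → ∀ x, 0 ≤ T t f x
  T_markov : ∀ t : ℝ, 0 < t → ∀ f, (∀ x, 0 ≤ f x ∧ f x ≤ 1) →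
    ∀ x, 0 ≤ T t f x ∧ T t f x ≤ 1
  T_cont : ∀ f, MemL2 m f → ∀ x, ContinuousOn (fun t => T t f x) (Set.Ioi (0 : ℝ))
  R_mem : ∀ α : ℝ, 0 < α → ∀ f, MemL2 m f → R α f ∈ dom
  R_pos : ∀ α : ℝ, 0 < α → ∀ f, (∀ x, 0 ≤ f x) → ∀ x, 0 ≤ R α f x
  R_char : ∀ α : ℝ, 0 < α → ∀ f, MemL2 m f → ∀ v ∈ dom,
    G.energyBilin (R α f) v + α * l2inner m (R α f) v = l2inner m f v
  R_laplace : ∀ α : ℝ, 0 < α → ∀ f, MemL2 m f → (∀ x, 0 ≤ f x) → ∀ y,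
    ENNReal.ofReal (R α f y) =
      ∫⁻ t in Set.Ioi (0 : ℝ), ENNReal.ofReal (Real.exp (-α * t) * T t f y)

namespace FormSetup

variable {V : Type*} {G : WeightedGraph V} {m : V → ℝ}

open scoped Classical in
/-- The Green function `G(x,y) = ∫₀^∞ (e^{-tL} δ_x)(y) dt`, with values in `[0,∞]`. -/
noncomputable def green (S : FormSetup G m) (x y : V) : ℝ≥0∞ :=
  ∫⁻ t in Set.Ioi (0 : ℝ), ENNReal.ofReal (S.T t (fun z => if z = x then 1 else 0) y)

/-- The extended Dirichlet space `D(Q)_e`: functions which are pointwise limits of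
`Q`-Cauchy sequences from `D(Q)`. -/
def extDom (S : FormSetup G m) : Set (V → ℝ) :=
  {u | ∃ f : ℕ → V → ℝ, (∀ n, f n ∈ S.dom) ∧
    (∀ ε > (0 : ℝ), ∃ N, ∀ p ≥ N, ∀ q ≥ N,
      G.energyBilin (fun x => f p x - f q x) (fun x => f p x - f q x) < ε) ∧
    ∀ x, Filter.Tendsto (fun n => f n x) Filter.atTop (nhds (u x))}

/-- Stochastic completeness: the resolvent `(L+1)^{-1}`, extended to `ℓ^∞(V)` by monotone
limits, maps the constant function `1` to `1`. -/
def StochComplete (S : FormSetup G m) : Prop :=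
  ∀ f : ℕ → V → ℝ, (∀ n, MemL2 m (f n)) →
    (∀ n x, 0 ≤ f n x ∧ f n x ≤ f (n + 1) x ∧ f n x ≤ 1) →
    (∀ x, Filter.Tendsto (fun n => f n x) Filter.atTop (nhds 1)) →
    ∀ x, Filter.Tendsto (fun n => S.R 1 (f n) x) Filter.atTop (nhds 1)

end FormSetup

set_option linter.unusedSectionVars false

section SumType
variable {α β : Type*}

lemma yam_hasSum_sumType {M : Type*} [AddCommMonoid M] [TopologicalSpace M] [ContinuousAdd M]
    {f : α ⊕ β → M} {x y : M} (ha : HasSum (fun a => f (.inl a)) x)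
    (hb : HasSum (fun b => f (.inr b)) y) : HasSum f (x + y) := by
  have h1 : HasSum (f ∘ (Subtype.val : Set.range (Sum.inl : α → α ⊕ β) → α ⊕ β)) x :=
    (Equiv.ofInjective _ Sum.inl_injective).hasSum_iff.mp ha
  have h2 : HasSum (f ∘ (Subtype.val : Set.range (Sum.inr : β → α ⊕ β) → α ⊕ β)) y :=
    (Equiv.ofInjective _ Sum.inr_injective).hasSum_iff.mp hb
  exact HasSum.add_isCompl Set.isCompl_range_inl_range_inr h1 h2

lemma yam_tsum_sumType (f : α ⊕ β → ℝ≥0∞) :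
    ∑' i, f i = (∑' a, f (.inl a)) + ∑' b, f (.inr b) :=
  (yam_hasSum_sumType ENNReal.summable.hasSum ENNReal.summable.hasSum).tsum_eq

end SumType

section Abstract
variable {I : Type*} {w : I → ℝ}

/-- The quadratic functional. -/
noncomputable def yamN (w : I → ℝ) (f : I → ℝ) : ℝ≥0∞ :=
  ∑' i, ENNReal.ofReal (w i * f i ^ 2)

variable (hw : ∀ i, 0 ≤ w i)
include hw

lemma yamN_summable {f : I → ℝ} (h : yamN w f ≠ ⊤) :
    Summable fun i => w i * f i ^ 2 := by
  have := ENNReal.summable_toReal h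
  have he : (fun i => (ENNReal.ofReal (w i * f i ^ 2)).toReal) = fun i => w i * f i ^ 2 := by
    funext i
    exact ENNReal.toReal_ofReal (mul_nonneg (hw i) (sq_nonneg _))
  rwa [he] at this

lemma yamN_eq {f : I → ℝ} (h : Summable fun i => w i * f i ^ 2) :
    yamN w f = ENNReal.ofReal (∑' i, w i * f i ^ 2) :=
  (ENNReal.ofReal_tsum_of_nonneg (fun i => mul_nonneg (hw i) (sq_nonneg _)) h).symm

lemma yamN_toReal {f : I → ℝ} (h : Summable fun i => w i * f i ^ 2) :
    (yamN w f).toReal = ∑' i, w i * f i ^ 2 := by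
  rw [yamN_eq hw h, ENNReal.toReal_ofReal]
  exact tsum_nonneg fun i => mul_nonneg (hw i) (sq_nonneg _)

lemma yamN_lt_top {f : I → ℝ} (h : Summable fun i => w i * f i ^ 2) :
    yamN w f < ⊤ := by
  rw [yamN_eq hw h]; exact ENNReal.ofReal_lt_top

lemma yam_summable_sub {f g : I → ℝ} (hf : Summable fun i => w i * f i ^ 2)
    (hg : Summable fun i => w i * g i ^ 2) :
    Summable fun i => w i * (f i - g i) ^ 2 := by
  refine Summable.of_nonneg_of_le (fun i => mul_nonneg (hw i) (sq_nonneg _))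
    (fun i => ?_) ((hf.mul_left 2).add (hg.mul_left 2))
  have h1 : (f i - g i) ^ 2 ≤ 2 * f i ^ 2 + 2 * g i ^ 2 := by nlinarith [sq_nonneg (f i + g i)]
  nlinarith [hw i, sq_nonneg (f i), sq_nonneg (g i)]

lemma yam_summable_mul {f g : I → ℝ} (hf : Summable fun i => w i * f i ^ 2)
    (hg : Summable fun i => w i * g i ^ 2) :
    Summable fun i => w i * f i * g i := by
  refine Summable.of_abs ?_
  refine Summable.of_nonneg_of_le (fun i => abs_nonneg _) (fun i => ?_)
    ((hf.mul_left (1/2)).add (hg.mul_left (1/2)))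
  have : |w i * f i * g i| = w i * |f i| * |g i| := by
    rw [abs_mul, abs_mul, abs_of_nonneg (hw i)]
  rw [this]
  have h2 : |f i| * |g i| ≤ (1/2) * f i ^ 2 + (1/2) * g i ^ 2 := by
    nlinarith [sq_nonneg (|f i| - |g i|), sq_abs (f i), sq_abs (g i)]
  nlinarith [hw i, mul_nonneg (abs_nonneg (f i)) (abs_nonneg (g i))]

/-- Cauchy–Schwarz for weighted tsums. -/
lemma yam_cs {f g : I → ℝ} (hf : Summable fun i => w i * f i ^ 2)
    (hg : Summable fun i => w i * g i ^ 2) :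
    |∑' i, w i * f i * g i| ≤
      Real.sqrt (∑' i, w i * f i ^ 2) * Real.sqrt (∑' i, w i * g i ^ 2) := by
  set A := ∑' i, w i * f i ^ 2 with hA
  set B := ∑' i, w i * g i ^ 2 with hB
  have hA0 : 0 ≤ A := tsum_nonneg fun i => mul_nonneg (hw i) (sq_nonneg _)
  have hB0 : 0 ≤ B := tsum_nonneg fun i => mul_nonneg (hw i) (sq_nonneg _)
  have key : ∀ s : Finset I, |∑ i ∈ s, w i * f i * g i| ≤ Real.sqrt A * Real.sqrt B := by
    intro s
    have h1 : (∑ i ∈ s, w i * f i * g i) ^ 2 ≤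
        (∑ i ∈ s, w i * f i ^ 2) * ∑ i ∈ s, w i * g i ^ 2 := by
      have := Finset.sum_mul_sq_le_sq_mul_sq s (fun i => Real.sqrt (w i) * f i)
        (fun i => Real.sqrt (w i) * g i)
      have e1 : ∀ i, Real.sqrt (w i) * f i * (Real.sqrt (w i) * g i) = w i * f i * g i := by
        intro i
        have h := Real.mul_self_sqrt (hw i)
        calc Real.sqrt (w i) * f i * (Real.sqrt (w i) * g i)
            = Real.sqrt (w i) * Real.sqrt (w i) * (f i * g i) := by ring
          _ = w i * f i * g i := by rw [h]; ring
      have e2 : ∀ i, (Real.sqrt (w i) * f i) ^ 2 = w i * f i ^ 2 := by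
        intro i
        rw [mul_pow, Real.sq_sqrt (hw i)]
      have e3 : ∀ i, (Real.sqrt (w i) * g i) ^ 2 = w i * g i ^ 2 := by
        intro i
        rw [mul_pow, Real.sq_sqrt (hw i)]
      simpa only [e1, e2, e3] using this
    have h2 : (∑ i ∈ s, w i * f i ^ 2) * ∑ i ∈ s, w i * g i ^ 2 ≤ A * B := by
      have p1 : ∑ i ∈ s, w i * f i ^ 2 ≤ A :=
        Summable.sum_le_tsum s (fun i _ => mul_nonneg (hw i) (sq_nonneg _)) hf
      have p2 : ∑ i ∈ s, w i * g i ^ 2 ≤ B :=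
        Summable.sum_le_tsum s (fun i _ => mul_nonneg (hw i) (sq_nonneg _)) hg
      have q1 : (0:ℝ) ≤ ∑ i ∈ s, w i * f i ^ 2 :=
        Finset.sum_nonneg fun i _ => mul_nonneg (hw i) (sq_nonneg _)
      have q2 : (0:ℝ) ≤ ∑ i ∈ s, w i * g i ^ 2 :=
        Finset.sum_nonneg fun i _ => mul_nonneg (hw i) (sq_nonneg _)
      exact mul_le_mul p1 p2 q2 hA0
    have := Real.abs_le_sqrt (h1.trans h2)
    rwa [Real.sqrt_mul hA0] at this
  have hsum := (yam_summable_mul hw hf hg).hasSum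
  have habs : Tendsto (fun s : Finset I => |∑ i ∈ s, w i * f i * g i|) atTop
      (nhds |∑' i, w i * f i * g i|) :=
    (continuous_abs.tendsto _).comp hsum
  exact le_of_tendsto habs (Filter.Eventually.of_forall key)

/-- Lower semicontinuity (Fatou). -/
lemma yam_lsc {a : ℕ → I → ℝ} {g : I → ℝ}
    (hpt : ∀ i, Tendsto (fun n => a n i) atTop (nhds (g i))) :
    yamN w g ≤ Filter.liminf (fun n => yamN w (a n)) atTop := by
  rw [yamN, ENNReal.tsum_eq_iSup_sum]
  refine iSup_le fun s => ?_
  have hconv : Tendsto (fun n => ∑ i ∈ s, ENNReal.ofReal (w i * a n i ^ 2)) atTop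
      (nhds (∑ i ∈ s, ENNReal.ofReal (w i * g i ^ 2))) := by
    refine tendsto_finset_sum s fun i _ => ?_
    refine (ENNReal.continuous_ofReal.tendsto _).comp ?_
    exact ((continuous_const.mul ((continuous_pow 2))).tendsto _).comp (hpt i)
  have hle : ∀ n, ∑ i ∈ s, ENNReal.ofReal (w i * a n i ^ 2) ≤ yamN w (a n) :=
    fun n => ENNReal.sum_le_tsum s
  calc ∑ i ∈ s, ENNReal.ofReal (w i * g i ^ 2)
      = Filter.liminf (fun n => ∑ i ∈ s, ENNReal.ofReal (w i * a n i ^ 2)) atTop :=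
        hconv.liminf_eq.symm
    _ ≤ Filter.liminf (fun n => yamN w (a n)) atTop :=
        Filter.liminf_le_liminf (Filter.Eventually.of_forall hle)

/-- Upper bound on limsup from norm convergence of the differences. -/
lemma yam_limsup_le {a : ℕ → I → ℝ} {g : I → ℝ} (hg : yamN w g ≠ ⊤)
    (hconv : Tendsto (fun n => yamN w (fun i => a n i - g i)) atTop (nhds 0)) :
    Filter.limsup (fun n => yamN w (a n)) atTop ≤ yamN w g := by
  refine ENNReal.le_of_forall_pos_le_add fun ε hε _ => ?_
  set t := (yamN w g).toReal with ht
  set δ : ℝ := (ε : ℝ) / (2 * (t + 1)) with hδdef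
  have ht0 : 0 ≤ t := ENNReal.toReal_nonneg
  have hδ : 0 < δ := by
    apply div_pos (by exact_mod_cast hε) (by linarith)
  -- pointwise bound
  have hpw : ∀ n, yamN w (a n) ≤
      ENNReal.ofReal (1 + δ) * yamN w g
        + ENNReal.ofReal (1 + δ⁻¹) * yamN w (fun i => a n i - g i) := by
    intro n
    simp only [yamN]
    rw [← ENNReal.tsum_mul_left, ← ENNReal.tsum_mul_left, ← ENNReal.tsum_add]
    refine ENNReal.tsum_le_tsum fun i => ?_
    have hδi0 : (0:ℝ) ≤ δ⁻¹ := (inv_pos.mpr hδ).le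
    have n1 : (0:ℝ) ≤ 1 + δ := by linarith
    have n2 : (0:ℝ) ≤ 1 + δ⁻¹ := by linarith
    rw [← ENNReal.ofReal_mul n1, ← ENNReal.ofReal_mul n2,
      ← ENNReal.ofReal_add (mul_nonneg n1 (mul_nonneg (hw i) (sq_nonneg _)))
        (mul_nonneg n2 (mul_nonneg (hw i) (sq_nonneg _)))]
    refine ENNReal.ofReal_le_ofReal ?_
    have key : a n i ^ 2 ≤ (1 + δ) * g i ^ 2 + (1 + δ⁻¹) * (a n i - g i) ^ 2 := by
      have hδi : 0 < δ⁻¹ := inv_pos.mpr hδ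
      have hd : δ * δ⁻¹ = 1 := mul_inv_cancel₀ (ne_of_gt hδ)
      nlinarith [sq_nonneg (δ * g i - (a n i - g i)), sq_nonneg (g i), sq_nonneg (a n i - g i),
        mul_pos hδ hδi]
    calc w i * a n i ^ 2 ≤ w i * ((1 + δ) * g i ^ 2 + (1 + δ⁻¹) * (a n i - g i) ^ 2) := by
          exact mul_le_mul_of_nonneg_left key (hw i)
      _ = (1 + δ) * (w i * g i ^ 2) + (1 + δ⁻¹) * (w i * (a n i - g i) ^ 2) := by ring
  -- the first summand is at most yamN w g + ε/2
  have hhalf : ENNReal.ofReal (1 + δ) * yamN w g ≤ yamN w g + ENNReal.ofReal ((ε:ℝ)/2) := by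
    have e1 : ENNReal.ofReal (1 + δ) = 1 + ENNReal.ofReal δ := by
      rw [ENNReal.ofReal_add zero_le_one hδ.le, ENNReal.ofReal_one]
    rw [e1, add_mul, one_mul]
    refine add_le_add le_rfl ?_
    have e2 : yamN w g = ENNReal.ofReal t := by
      rw [ht, ENNReal.ofReal_toReal hg]
    rw [e2, ← ENNReal.ofReal_mul hδ.le]
    refine ENNReal.ofReal_le_ofReal ?_
    rw [hδdef]
    rw [div_mul_eq_mul_div, div_le_iff₀ (by linarith)]
    have : (ε:ℝ) * t ≤ (ε:ℝ) * (t+1) := by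
      have : (0:ℝ) ≤ (ε:ℝ) := ε.coe_nonneg
      nlinarith
    calc (ε:ℝ) * t ≤ (ε:ℝ) * (t+1) := this
      _ = (ε:ℝ)/2 * (2*(t+1)) := by ring
  -- the second summand is eventually at most ε/2
  have hc : ENNReal.ofReal (1 + δ⁻¹) ≠ ⊤ := ENNReal.ofReal_ne_top
  have htend : Tendsto (fun n => ENNReal.ofReal (1 + δ⁻¹) * yamN w (fun i => a n i - g i))
      atTop (nhds 0) := by
    have := ENNReal.Tendsto.const_mul hconv (Or.inr hc)
    simpa using this
  have hpos2 : (0:ℝ≥0∞) < ENNReal.ofReal ((ε:ℝ)/2) := by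
    rw [ENNReal.ofReal_pos]
    have : (0:ℝ) < (ε:ℝ) := by exact_mod_cast hε
    linarith
  have hev : ∀ᶠ n in atTop,
      ENNReal.ofReal (1 + δ⁻¹) * yamN w (fun i => a n i - g i) ≤ ENNReal.ofReal ((ε:ℝ)/2) :=
    (htend.eventually (Iio_mem_nhds hpos2)).mono fun n hn => le_of_lt hn
  have hfin : ∀ᶠ n in atTop, yamN w (a n) ≤ yamN w g + (ε : ℝ≥0∞) := by
    refine hev.mono fun n hn => ?_
    calc yamN w (a n) ≤ ENNReal.ofReal (1 + δ) * yamN w g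
          + ENNReal.ofReal (1 + δ⁻¹) * yamN w (fun i => a n i - g i) := hpw n
      _ ≤ (yamN w g + ENNReal.ofReal ((ε:ℝ)/2)) + ENNReal.ofReal ((ε:ℝ)/2) :=
          add_le_add hhalf hn
      _ = yamN w g + (ENNReal.ofReal ((ε:ℝ)/2) + ENNReal.ofReal ((ε:ℝ)/2)) := by ring
      _ = yamN w g + (ε : ℝ≥0∞) := by
          rw [← ENNReal.ofReal_add (by positivity) (by positivity)]
          norm_num
  exact limsup_le_of_le (by isBoundedDefault) hfin

/-- Weak convergence: pointwise convergence + uniform square bound gives convergence of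
inner products against a fixed square-summable function. -/
lemma yam_weak {a : ℕ → I → ℝ} {g : I → ℝ} {C : ℝ}
    (hg : Summable fun i => w i * g i ^ 2)
    (ha : ∀ n, Summable fun i => w i * a n i ^ 2)
    (hC : ∀ n, (∑' i, w i * a n i ^ 2) ≤ C)
    (hpt : ∀ i, Tendsto (fun n => a n i) atTop (nhds (g i))) :
    Tendsto (fun n => ∑' i, w i * (a n i - g i) * g i) atTop (nhds 0) := by
  have hC0 : 0 ≤ C := le_trans (tsum_nonneg fun i => mul_nonneg (hw i) (sq_nonneg _)) (hC 0)
  set Sg := ∑' i, w i * g i ^ 2 with hSg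
  have hSg0 : 0 ≤ Sg := tsum_nonneg fun i => mul_nonneg (hw i) (sq_nonneg _)
  -- summability of differences
  have hd : ∀ n, Summable fun i => w i * (a n i - g i) ^ 2 := fun n => yam_summable_sub hw (ha n) hg
  have hdg : ∀ n, Summable fun i => w i * (a n i - g i) * g i := by
    intro n
    have := yam_summable_mul hw (hd n) hg
    simpa using this
  -- uniform bound on differences
  have hdbd : ∀ n, (∑' i, w i * (a n i - g i) ^ 2) ≤ 2 * C + 2 * Sg := by
    intro n
    have hle : ∀ i, w i * (a n i - g i) ^ 2 ≤ 2 * (w i * a n i ^ 2) + 2 * (w i * g i ^ 2) := by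
      intro i
      have h1 : (a n i - g i) ^ 2 ≤ 2 * a n i ^ 2 + 2 * g i ^ 2 := by
        nlinarith [sq_nonneg (a n i + g i)]
      nlinarith [hw i, sq_nonneg (a n i), sq_nonneg (g i)]
    calc (∑' i, w i * (a n i - g i) ^ 2)
        ≤ ∑' i, (2 * (w i * a n i ^ 2) + 2 * (w i * g i ^ 2)) :=
          Summable.tsum_le_tsum hle (hd n) (((ha n).mul_left 2).add (hg.mul_left 2))
      _ = 2 * (∑' i, w i * a n i ^ 2) + 2 * Sg := by
          rw [Summable.tsum_add ((ha n).mul_left 2) (hg.mul_left 2), tsum_mul_left, tsum_mul_left]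
      _ ≤ 2 * C + 2 * Sg := by
          have := hC n
          linarith
  set B := Real.sqrt (2 * C + 2 * Sg) + 1 with hB
  have hB1 : 1 ≤ B := by
    have : 0 ≤ Real.sqrt (2 * C + 2 * Sg) := Real.sqrt_nonneg _
    linarith
  have hBpos : 0 < B := by linarith
  rw [Metric.tendsto_atTop]
  intro ε hε
  set η : ℝ := (ε / (2 * B)) ^ 2 with hη
  have hηpos : 0 < η := by positivity
  -- choose a finite set with small tail
  obtain ⟨s, hs⟩ : ∃ s : Finset I, (∑' i : ((s : Set I)ᶜ : Set I), w i * g i ^ 2) < η := by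
    have h1 : Tendsto (fun s : Finset I => ∑ i ∈ s, w i * g i ^ 2) atTop (nhds Sg) := hg.hasSum
    have h2 : ∀ᶠ s : Finset I in atTop, Sg - η < ∑ i ∈ s, w i * g i ^ 2 :=
      h1.eventually (eventually_gt_nhds (by linarith))
    obtain ⟨s, hs⟩ := h2.exists
    refine ⟨s, ?_⟩
    have := Summable.sum_add_tsum_compl (s := s) hg
    linarith
  have htail0 : 0 ≤ ∑' i : ((s : Set I)ᶜ : Set I), w i * g i ^ 2 :=
    tsum_nonneg fun i => mul_nonneg (hw i.1) (sq_nonneg _)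
  -- finite part tends to zero
  have hfin : Tendsto (fun n => ∑ i ∈ s, w i * (a n i - g i) * g i) atTop (nhds 0) := by
    have : Tendsto (fun n => ∑ i ∈ s, w i * (a n i - g i) * g i) atTop
        (nhds (∑ i ∈ s, w i * (g i - g i) * g i)) := by
      refine tendsto_finset_sum s fun i _ => ?_
      have h3 : Tendsto (fun n => a n i - g i) atTop (nhds (g i - g i)) :=
        (hpt i).sub tendsto_const_nhds
      have h4 : Tendsto (fun n => w i * (a n i - g i) * g i) atTop
          (nhds (w i * (g i - g i) * g i)) := by
        exact ((h3.const_mul (w i)).mul_const (g i))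
      exact h4
    simpa using this
  have hev1 : ∀ᶠ n in atTop, |∑ i ∈ s, w i * (a n i - g i) * g i| < ε / 2 := by
    have habs : Tendsto (fun n => |∑ i ∈ s, w i * (a n i - g i) * g i|) atTop (nhds 0) := by
      simpa using hfin.abs
    exact habs.eventually (eventually_lt_nhds (by linarith))
  obtain ⟨N, hN⟩ := Filter.eventually_atTop.mp hev1
  refine ⟨N, fun n hn => ?_⟩
  -- tail estimate via Cauchy–Schwarz on the complement
  have hcs : ∀ m : ℕ, |∑' i : ((s : Set I)ᶜ : Set I), w i.1 * (a m i.1 - g i.1) * g i.1| ≤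
      B * Real.sqrt η := by
    intro m
    have h1 : Summable fun i : ((s : Set I)ᶜ : Set I) => w i.1 * (a m i.1 - g i.1) ^ 2 :=
      (hd m).subtype _
    have h2 : Summable fun i : ((s : Set I)ᶜ : Set I) => w i.1 * g i.1 ^ 2 :=
      hg.subtype _
    have hcs0 := yam_cs (w := fun i : ((s : Set I)ᶜ : Set I) => w i.1)
      (f := fun i : ((s : Set I)ᶜ : Set I) => a m i.1 - g i.1)
      (g := fun i : ((s : Set I)ᶜ : Set I) => g i.1) (fun i => hw i.1) h1 h2
    have hb1 : (∑' i : ((s : Set I)ᶜ : Set I), w i.1 * (a m i.1 - g i.1) ^ 2) ≤ 2 * C + 2 * Sg := by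
      have hsplit := Summable.sum_add_tsum_compl (s := s) (hd m)
      have hpos : (0:ℝ) ≤ ∑ i ∈ s, w i * (a m i - g i) ^ 2 :=
        Finset.sum_nonneg fun i _ => mul_nonneg (hw i) (sq_nonneg _)
      have := hdbd m
      linarith
    have hb2 : (∑' i : ((s : Set I)ᶜ : Set I), w i.1 * g i.1 ^ 2) ≤ η := (le_of_lt hs)
    calc |∑' i : ((s : Set I)ᶜ : Set I), w i.1 * (a m i.1 - g i.1) * g i.1|
        ≤ Real.sqrt (∑' i : ((s : Set I)ᶜ : Set I), w i.1 * (a m i.1 - g i.1) ^ 2) *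
          Real.sqrt (∑' i : ((s : Set I)ᶜ : Set I), w i.1 * g i.1 ^ 2) := hcs0
      _ ≤ Real.sqrt (2 * C + 2 * Sg) * Real.sqrt η := by
          refine mul_le_mul (Real.sqrt_le_sqrt hb1) (Real.sqrt_le_sqrt hb2)
            (Real.sqrt_nonneg _) (Real.sqrt_nonneg _)
      _ ≤ B * Real.sqrt η := by
          refine mul_le_mul_of_nonneg_right ?_ (Real.sqrt_nonneg _)
          rw [hB]; linarith
  -- combine
  have hsqη : Real.sqrt η = ε / (2 * B) := by
    rw [hη, Real.sqrt_sq (by positivity)]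
  have htb : B * Real.sqrt η = ε / 2 := by
    rw [hsqη]; field_simp
  have hdecomp : ∀ m, (∑' i, w i * (a m i - g i) * g i) =
      (∑ i ∈ s, w i * (a m i - g i) * g i)
        + ∑' i : ((s : Set I)ᶜ : Set I), w i.1 * (a m i.1 - g i.1) * g i.1 :=
    fun m => (Summable.sum_add_tsum_compl (s := s) (hdg m)).symm
  rw [Real.dist_eq, sub_zero, hdecomp n]
  calc |(∑ i ∈ s, w i * (a n i - g i) * g i)
        + ∑' i : ((s : Set I)ᶜ : Set I), w i.1 * (a n i.1 - g i.1) * g i.1|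
      ≤ |∑ i ∈ s, w i * (a n i - g i) * g i|
        + |∑' i : ((s : Set I)ᶜ : Set I), w i.1 * (a n i.1 - g i.1) * g i.1| := abs_add_le _ _
    _ < ε / 2 + B * Real.sqrt η := add_lt_add_of_lt_of_le (hN n hn) (hcs n)
    _ = ε := by rw [htb]; ring

/-- Radon–Riesz type: pointwise convergence + limsup bound implies norm convergence. -/
lemma yam_main_backward {a : ℕ → I → ℝ} {g : I → ℝ}
    (hg : Summable fun i => w i * g i ^ 2)
    (ha : ∀ n, Summable fun i => w i * a n i ^ 2)
    (hpt : ∀ i, Tendsto (fun n => a n i) atTop (nhds (g i)))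
    (hls : Filter.limsup (fun n => yamN w (a n)) atTop ≤ yamN w g) :
    Tendsto (fun n => (yamN w (fun i => a n i - g i)).toReal) atTop (nhds 0) := by
  set Sg := ∑' i, w i * g i ^ 2 with hSg
  have hNg : yamN w g = ENNReal.ofReal Sg := yamN_eq hw hg
  have hNgt : yamN w g ≠ ⊤ := by rw [hNg]; exact ENNReal.ofReal_ne_top
  -- N (a n) tends to N g
  have hliminf : yamN w g ≤ Filter.liminf (fun n => yamN w (a n)) atTop := yam_lsc hw hpt
  have hlim : Tendsto (fun n => yamN w (a n)) atTop (nhds (yamN w g)) := by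
    have h1 : Filter.liminf (fun n => yamN w (a n)) atTop = yamN w g :=
      le_antisymm (le_trans (liminf_le_limsup) hls) hliminf
    have h2 : Filter.limsup (fun n => yamN w (a n)) atTop = yamN w g :=
      le_antisymm hls (h1 ▸ liminf_le_limsup)
    exact tendsto_of_liminf_eq_limsup h1 h2
  -- real energies converge
  have hEn : Tendsto (fun n => ∑' i, w i * a n i ^ 2) atTop (nhds Sg) := by
    have h1 : Tendsto (fun n => (yamN w (a n)).toReal) atTop (nhds (yamN w g).toReal) := by
      rw [ENNReal.tendsto_toReal_iff (fun n => (yamN_lt_top hw (ha n)).ne) hNgt]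
      exact hlim
    have h2 : (yamN w g).toReal = Sg := yamN_toReal hw hg
    have h3 : ∀ n, (yamN w (a n)).toReal = ∑' i, w i * a n i ^ 2 :=
      fun n => yamN_toReal hw (ha n)
    rw [h2] at h1
    simpa only [h3] using h1
  -- uniform bound
  obtain ⟨C, hC⟩ : ∃ C, ∀ n, (∑' i, w i * a n i ^ 2) ≤ C := by
    obtain ⟨C, hC⟩ := hEn.bddAbove_range
    exact ⟨C, fun n => hC (Set.mem_range_self n)⟩
  -- weak convergence
  have hweak := yam_weak hw hg ha hC hpt
  -- expansion identity
  have hd : ∀ n, Summable fun i => w i * (a n i - g i) ^ 2 := fun n => yam_summable_sub hw (ha n) hg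
  have hmul : ∀ n, Summable fun i => w i * (a n i - g i) * g i := by
    intro n
    simpa using yam_summable_mul hw (hd n) hg
  have hiden : ∀ n, (∑' i, w i * (a n i - g i) ^ 2) =
      (∑' i, w i * a n i ^ 2) - Sg - 2 * ∑' i, w i * (a n i - g i) * g i := by
    intro n
    have he : (fun i => w i * (a n i - g i) ^ 2) =
        fun i => (w i * a n i ^ 2 - w i * g i ^ 2) - 2 * (w i * (a n i - g i) * g i) := by
      funext i; ring
    rw [he, Summable.tsum_sub (((ha n).sub hg)) ((hmul n).mul_left 2),
      Summable.tsum_sub (ha n) hg, tsum_mul_left]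
  -- conclude
  have hfinal : Tendsto (fun n => ∑' i, w i * (a n i - g i) ^ 2) atTop (nhds 0) := by
    have h1 : Tendsto (fun n => (∑' i, w i * a n i ^ 2) - Sg
        - 2 * ∑' i, w i * (a n i - g i) * g i) atTop (nhds (Sg - Sg - 2 * 0)) :=
      ((hEn.sub tendsto_const_nhds)).sub (hweak.const_mul 2)
    have h2 : Sg - Sg - 2 * (0:ℝ) = 0 := by ring
    rw [h2] at h1
    simpa only [hiden] using h1.congr fun n => (hiden n).symm
  have heq : ∀ n, (yamN w (fun i => a n i - g i)).toReal = ∑' i, w i * (a n i - g i) ^ 2 :=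
    fun n => yamN_toReal hw (hd n)
  simpa only [heq] using hfinal

end Abstract


section Graph
variable {V : Type*}

/-- The combined weight function. -/
noncomputable def yamW (G : WeightedGraph V) : (V × V) ⊕ V → ℝ :=
  Sum.elim (fun p => G.b p.1 p.2 / 2) G.c

/-- The combined difference operator. -/
def yamL (u : V → ℝ) : (V × V) ⊕ V → ℝ :=
  Sum.elim (fun p => u p.1 - u p.2) u

lemma yamW_nonneg (G : WeightedGraph V) : ∀ i, 0 ≤ yamW G i := by
  rintro (p | x)
  · exact div_nonneg (G.b_nonneg _ _) (by norm_num)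
  · exact G.c_nonneg x

lemma yamL_sub (u v : V → ℝ) :
    yamL (fun x => u x - v x) = fun i => yamL u i - yamL v i := by
  funext i
  rcases i with p | x <;> simp [yamL] <;> ring

lemma energy_eq_yamN (G : WeightedGraph V) (u : V → ℝ) :
    G.energy u = yamN (yamW G) (yamL u) := by
  rw [yamN, yam_tsum_sumType]
  simp only [yamW, yamL, Sum.elim_inl, Sum.elim_inr]
  rw [WeightedGraph.energy]
  congr 1
  rw [← ENNReal.tsum_mul_left]
  refine tsum_congr fun p => ?_
  have h2 : (1/2 : ℝ≥0∞) = ENNReal.ofReal (1/2) := by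
    rw [ENNReal.ofReal_div_of_pos (by norm_num), ENNReal.ofReal_one, ENNReal.ofReal_ofNat]
  rw [h2, ← ENNReal.ofReal_mul (by norm_num)]
  congr 1
  ring

end Graph

lemma yam_sq_tendsto_zero {f : ℕ → ℝ} (h : Tendsto (fun n => f n ^ 2) atTop (nhds 0)) :
    Tendsto f atTop (nhds 0) := by
  rw [tendsto_zero_iff_abs_tendsto_zero]
  have h1 : Tendsto (fun n => Real.sqrt (f n ^ 2)) atTop (nhds (Real.sqrt 0)) :=
    (Real.continuous_sqrt.tendsto _).comp h
  simpa [Real.sqrt_sq_eq_abs, Real.sqrt_zero, Function.comp_def] using h1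


/-- convergence criterion in the Yamasaki space: `‖u_n - u‖_o → 0` iff
`u_n → u` pointwise and `limsup Q̃(u_n) ≤ Q̃(u)`. -/
theorem yamasaki_convergence_iff {V : Type*} [Countable V] (G : WeightedGraph V)
    (hconn : G.Connected) (o : V) (u : ℕ → V → ℝ) (v : V → ℝ)
    (hu : ∀ n, G.FiniteEnergy (u n)) (hv : G.FiniteEnergy v) :
    Filter.Tendsto (fun n => G.ydistSq o (u n) v) Filter.atTop (nhds 0) ↔
      ((∀ x, Filter.Tendsto (fun n => u n x) Filter.atTop (nhds (v x))) ∧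
        Filter.limsup (fun n => G.energy (u n)) Filter.atTop ≤ G.energy v) := by
  set w := yamW G with hwdef
  have hw : ∀ i, 0 ≤ w i := yamW_nonneg G
  set g := yamL v with hgdef
  set a : ℕ → (V × V) ⊕ V → ℝ := fun n => yamL (u n) with hadef
  have hga : Summable fun i => w i * g i ^ 2 := by
    refine yamN_summable hw ?_
    rw [← energy_eq_yamN]
    exact hv.ne
  have han : ∀ n, Summable fun i => w i * a n i ^ 2 := by
    intro n
    refine yamN_summable hw ?_
    rw [← energy_eq_yamN]
    exact (hu n).ne
  have hE : ∀ n, G.energy (fun x => u n x - v x) = yamN w (fun i => a n i - g i) := by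
    intro n
    rw [energy_eq_yamN, hadef, hgdef, hwdef, yamL_sub]
  have hdsum : ∀ n, Summable fun i => w i * (a n i - g i) ^ 2 :=
    fun n => yam_summable_sub hw (han n) hga
  have hEfin : ∀ n, G.energy (fun x => u n x - v x) ≠ ⊤ := by
    intro n
    rw [hE n]
    exact (yamN_lt_top hw (hdsum n)).ne
  simp only [WeightedGraph.ydistSq]
  constructor
  · -- forward
    intro h
    have hnn1 : ∀ n, 0 ≤ (G.energy (fun x => u n x - v x)).toReal := fun n => ENNReal.toReal_nonneg
    have hnn2 : ∀ n, 0 ≤ (u n o - v o) ^ 2 := fun n => sq_nonneg _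
    have htoReal : Tendsto (fun n => (G.energy (fun x => u n x - v x)).toReal) atTop (nhds 0) :=
      squeeze_zero hnn1 (fun n => le_add_of_nonneg_right (hnn2 n)) h
    have hsq : Tendsto (fun n => (u n o - v o) ^ 2) atTop (nhds 0) :=
      squeeze_zero hnn2 (fun n => le_add_of_nonneg_left (hnn1 n)) h
    have ho : Tendsto (fun n => u n o - v o) atTop (nhds 0) := yam_sq_tendsto_zero hsq
    -- convergence of the energies of differences in ℝ≥0∞
    have hEtop : Tendsto (fun n => G.energy (fun x => u n x - v x)) atTop (nhds 0) := by
      have := (ENNReal.tendsto_toReal_iff hEfin (x := 0) (by simp)).mp (by simpa using htoReal)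
      exact this
    -- edge convergence
    have hedge : ∀ x y, 0 < G.b x y →
        Tendsto (fun n => (u n x - v x) - (u n y - v y)) atTop (nhds 0) := by
      intro x y hb
      refine yam_sq_tendsto_zero ?_
      have hbound : ∀ n, ((u n x - v x) - (u n y - v y)) ^ 2 ≤
          2 / G.b x y * (G.energy (fun x => u n x - v x)).toReal := by
        intro n
        have h1 : ENNReal.ofReal (w (Sum.inl (x, y)) *
            ((a n (Sum.inl (x, y)) - g (Sum.inl (x, y)))) ^ 2) ≤
            yamN w (fun i => a n i - g i) := ENNReal.le_tsum (Sum.inl (x, y))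
        rw [← hE n] at h1
        have h2 := ENNReal.toReal_mono (hEfin n) h1
        rw [ENNReal.toReal_ofReal (mul_nonneg (hw _) (sq_nonneg _))] at h2
        have h3 : w (Sum.inl (x, y)) * ((a n (Sum.inl (x, y)) - g (Sum.inl (x, y)))) ^ 2
            = G.b x y / 2 * ((u n x - v x) - (u n y - v y)) ^ 2 := by
          simp only [hwdef, hadef, hgdef, yamW, yamL, Sum.elim_inl]
          ring
        rw [h3] at h2
        rw [div_mul_eq_mul_div, le_div_iff₀ hb]
        nlinarith [h2]
      refine squeeze_zero (fun n => sq_nonneg _) hbound ?_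
      have := htoReal.const_mul (2 / G.b x y)
      simpa using this
    -- pointwise convergence along paths
    have hpt0 : ∀ x, Tendsto (fun n => u n x - v x) atTop (nhds 0) := by
      intro x
      obtain ⟨len, p, hp0, hpl, hpe⟩ := hconn o x
      have key : ∀ i, i ≤ len → Tendsto (fun n => u n (p i) - v (p i)) atTop (nhds 0) := by
        intro i
        induction i with
        | zero => intro _; rw [hp0]; exact ho
        | succ i ih =>
          intro hi
          have hi' : i < len := Nat.lt_of_succ_le hi
          have h1 := ih hi'.le
          have h2 := hedge (p i) (p (i + 1)) (hpe i hi')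
          have h3 := h1.sub h2
          have h4 : (0:ℝ) - 0 = 0 := by ring
          rw [h4] at h3
          refine h3.congr fun n => ?_
          ring
      have := key len le_rfl
      rwa [hpl] at this
    refine ⟨fun x => ?_, ?_⟩
    · have h1 := (hpt0 x).add (tendsto_const_nhds (x := v x))
      simpa using h1
    · -- limsup bound
      have hconv : Tendsto (fun n => yamN w (fun i => a n i - g i)) atTop (nhds 0) := by
        simpa only [hE] using hEtop
      have hgfin : yamN w g ≠ ⊤ := by
        rw [← energy_eq_yamN]
        exact hv.ne
      have hres := yam_limsup_le hw hgfin hconv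
      simp only [energy_eq_yamN G]
      exact hres
  · -- backward
    rintro ⟨hpt, hls⟩
    have hpt' : ∀ i, Tendsto (fun n => a n i) atTop (nhds (g i)) := by
      rintro (p | x)
      · simp only [hadef, hgdef, yamL, Sum.elim_inl]
        exact (hpt p.1).sub (hpt p.2)
      · simpa only [hadef, hgdef, yamL, Sum.elim_inr] using hpt x
    have hls' : Filter.limsup (fun n => yamN w (a n)) atTop ≤ yamN w g := by
      simp only [energy_eq_yamN G] at hls
      exact hls
    have h1 := yam_main_backward hw hga han hpt' hls'
    have h1' : Tendsto (fun n => (G.energy (fun x => u n x - v x)).toReal) atTop (nhds 0) := by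
      simpa only [hE] using h1
    have h2 : Tendsto (fun n => (u n o - v o) ^ 2) atTop (nhds 0) := by
      have h3 : Tendsto (fun n => u n o - v o) atTop (nhds (v o - v o)) :=
        (hpt o).sub tendsto_const_nhds
      rw [sub_self] at h3
      have := h3.pow 2
      simpa using this
    simpa using h1'.add h2
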